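/- arXiv:1403.6536 — 3 statements merged into one kernel-verified Lean document; each statement's English description precedes it below -/
import Mathlib

section
/- In the down-up algebra A(r+s, -rs), the elements x = du - r·ud and y = ud - s·du commute: xy = yx. -/
noncomputable section

/-- The defining relations of the down-up algebra `A(r+s, -rs)`:
`d²u = (r+s)·dud - rs·ud²` and `du² = (r+s)·udu - rs·u²d`,
where `d` is the generator indexed by `0` and `u` the one indexed by `1`. -/
inductive DownUpRel (K : Type) [CommRing K] (r s : K) :
    FreeAlgebra K (Fin 2) → FreeAlgebra K (Fin 2) → Prop
  | rel1 : DownUpRel K r s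
      (FreeAlgebra.ι K 0 * FreeAlgebra.ι K 0 * FreeAlgebra.ι K 1)
      ((r + s) • (FreeAlgebra.ι K 0 * FreeAlgebra.ι K 1 * FreeAlgebra.ι K 0)
        - (r * s) • (FreeAlgebra.ι K 1 * FreeAlgebra.ι K 0 * FreeAlgebra.ι K 0))
  | rel2 : DownUpRel K r s
      (FreeAlgebra.ι K 0 * FreeAlgebra.ι K 1 * FreeAlgebra.ι K 1)
      ((r + s) • (FreeAlgebra.ι K 1 * FreeAlgebra.ι K 0 * FreeAlgebra.ι K 1)
        - (r * s) • (FreeAlgebra.ι K 1 * FreeAlgebra.ι K 1 * FreeAlgebra.ι K 0))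

/-- The down-up algebra `A(r+s, -rs)`. -/
abbrev DownUp (K : Type) [CommRing K] (r s : K) : Type := RingQuot (DownUpRel K r s)

/-- The generator `d` of the down-up algebra. -/
def DownUp.d (K : Type) [CommRing K] (r s : K) : DownUp K r s :=
  RingQuot.mkAlgHom K (DownUpRel K r s) (FreeAlgebra.ι K 0)

/-- The generator `u` of the down-up algebra. -/
def DownUp.u (K : Type) [CommRing K] (r s : K) : DownUp K r s :=
  RingQuot.mkAlgHom K (DownUpRel K r s) (FreeAlgebra.ι K 1)

/-- The element `x = du - r·ud`. -/
def DownUp.x (K : Type) [CommRing K] (r s : K) : DownUp K r s :=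
  DownUp.d K r s * DownUp.u K r s - r • (DownUp.u K r s * DownUp.d K r s)

/-- The element `y = ud - s·du`. -/
def DownUp.y (K : Type) [CommRing K] (r s : K) : DownUp K r s :=
  DownUp.u K r s * DownUp.d K r s - s • (DownUp.d K r s * DownUp.u K r s)

/-- In the down-up algebra `A(r+s,-rs)`, the elements `x = du - r·ud` and
`y = ud - s·du` commute: `xy = yx`. -/
theorem stmt3 (K : Type) [Field K] [CharZero K] (r s : K) (hrs : r * s ≠ 0) :
    DownUp.x K r s * DownUp.y K r s = DownUp.y K r s * DownUp.x K r s := by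
  set d := DownUp.d K r s with hd
  set u := DownUp.u K r s with hu
  have h1 : d * d * u = (r + s) • (d * u * d) - (r * s) • (u * d * d) := by
    have := RingQuot.mkAlgHom_rel K (DownUpRel.rel1 (K := K) (r := r) (s := s))
    simpa [hd, hu, DownUp.d, DownUp.u, map_mul, map_sub, map_smul] using this
  have h2 : d * u * u = (r + s) • (u * d * u) - (r * s) • (u * u * d) := by
    have := RingQuot.mkAlgHom_rel K (DownUpRel.rel2 (K := K) (r := r) (s := s))
    simpa [hd, hu, DownUp.d, DownUp.u, map_mul, map_sub, map_smul] using this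
  have key : d * u * u * d = u * d * d * u := by
    have e1 : d * u * u * d = (r + s) • (u * d * u * d) - (r * s) • (u * u * d * d) := by
      rw [h2, sub_mul, smul_mul_assoc, smul_mul_assoc]
    have e2 : u * (d * d * u) = (r + s) • (u * (d * u * d)) - (r * s) • (u * (u * d * d)) := by
      rw [h1, mul_sub, mul_smul_comm, mul_smul_comm]
    rw [e1]
    calc (r + s) • (u * d * u * d) - (r * s) • (u * u * d * d)
        = (r + s) • (u * (d * u * d)) - (r * s) • (u * (u * d * d)) := by
          simp [mul_assoc]
      _ = u * (d * d * u) := e2.symm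
      _ = u * d * d * u := by simp [mul_assoc]
  simp only [DownUp.x, DownUp.y, ← hd, ← hu]
  simp only [mul_sub, sub_mul, smul_mul_assoc, mul_smul_comm, smul_smul, ← mul_assoc, key]
  module
end
end

section
/- Suppose r, s satisfy either (rᵐsⁿ = 1 ⟹ m = n = 0) or (r = s⁻¹ = q not a root of unity). Then any surjective K-algebra endomorphism of the down-up algebra A(r+s, -rs) is an algebra automorphism. -/
noncomputable section

universe u

namespace DownUpAux

variable {K : Type} [Field K] {r s : K}

section lift
variable (K r s)

/-- Universal property: map out of the down-up algebra. -/
def dlift {B : Type u} [Ring B] [Algebra K B] (D U : B)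
    (h1 : D * D * U = (r + s) • (D * U * D) - (r * s) • (U * D * D))
    (h2 : D * U * U = (r + s) • (U * D * U) - (r * s) • (U * U * D)) :
    DownUp K r s →ₐ[K] B :=
  RingQuot.liftAlgHom K ⟨FreeAlgebra.lift K ![D, U], by
    rintro x y ⟨⟩ <;> simp [h1, h2]⟩

@[simp] lemma dlift_d {B : Type u} [Ring B] [Algebra K B] (D U : B) (h1) (h2) :
    dlift K r s D U h1 h2 (DownUp.d K r s) = D := by
  rw [DownUp.d, dlift, RingQuot.liftAlgHom_mkAlgHom_apply]
  simp

@[simp] lemma dlift_u {B : Type u} [Ring B] [Algebra K B] (D U : B) (h1) (h2) :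
    dlift K r s D U h1 h2 (DownUp.u K r s) = U := by
  rw [DownUp.u, dlift, RingQuot.liftAlgHom_mkAlgHom_apply]
  simp

lemma hom_ext {B : Type u} [Semiring B] [Algebra K B]
    {f g : DownUp K r s →ₐ[K] B}
    (h0 : f (DownUp.d K r s) = g (DownUp.d K r s))
    (h1 : f (DownUp.u K r s) = g (DownUp.u K r s)) : f = g := by
  apply RingQuot.ringQuot_ext'
  apply FreeAlgebra.hom_ext
  funext i
  fin_cases i
  · exact h0
  · exact h1

lemma rel1A : DownUp.d K r s * DownUp.d K r s * DownUp.u K r s =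
    (r + s) • (DownUp.d K r s * DownUp.u K r s * DownUp.d K r s)
      - (r * s) • (DownUp.u K r s * DownUp.d K r s * DownUp.d K r s) := by
  have h := RingQuot.mkAlgHom_rel K (DownUpRel.rel1 (K := K) (r := r) (s := s))
  simpa only [map_mul, map_sub, map_smul, DownUp.d, DownUp.u] using h

lemma rel2A : DownUp.d K r s * DownUp.u K r s * DownUp.u K r s =
    (r + s) • (DownUp.u K r s * DownUp.d K r s * DownUp.u K r s)
      - (r * s) • (DownUp.u K r s * DownUp.u K r s * DownUp.d K r s) := by
  have h := RingQuot.mkAlgHom_rel K (DownUpRel.rel2 (K := K) (r := r) (s := s))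
  simpa only [map_mul, map_sub, map_smul, DownUp.d, DownUp.u] using h

end lift

end DownUpAux

namespace DownUpAux

open Polynomial

variable (K : Type) [Field K] (r s : K)

lemma relP1 : (C (DownUp.d K r s) * X) * (C (DownUp.d K r s) * X) * (C (DownUp.u K r s) * X) =
    (r + s) • ((C (DownUp.d K r s) * X) * (C (DownUp.u K r s) * X) * (C (DownUp.d K r s) * X))
      - (r * s) • ((C (DownUp.u K r s) * X) * (C (DownUp.d K r s) * X) * (C (DownUp.d K r s) * X)) := by
  simp only [C_mul_X_eq_monomial, monomial_mul_monomial]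
  rw [rel1A K r s]
  rw [map_sub, ← Polynomial.smul_monomial, ← Polynomial.smul_monomial]

lemma relP2 : (C (DownUp.d K r s) * X) * (C (DownUp.u K r s) * X) * (C (DownUp.u K r s) * X) =
    (r + s) • ((C (DownUp.u K r s) * X) * (C (DownUp.d K r s) * X) * (C (DownUp.u K r s) * X))
      - (r * s) • ((C (DownUp.u K r s) * X) * (C (DownUp.u K r s) * X) * (C (DownUp.d K r s) * X)) := by
  simp only [C_mul_X_eq_monomial, monomial_mul_monomial]
  rw [rel2A K r s]
  rw [map_sub, ← Polynomial.smul_monomial, ← Polynomial.smul_monomial]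

/-- The "dilation" map recording the grading of the down-up algebra. -/
def Δ : DownUp K r s →ₐ[K] Polynomial (DownUp K r s) :=
  dlift K r s (C (DownUp.d K r s) * X) (C (DownUp.u K r s) * X) (relP1 K r s) (relP2 K r s)

@[simp] lemma Δ_d : Δ K r s (DownUp.d K r s) = C (DownUp.d K r s) * X := by
  rw [Δ]; simp

@[simp] lemma Δ_u : Δ K r s (DownUp.u K r s) = C (DownUp.u K r s) * X := by
  rw [Δ]; simp

/-- Sum-of-coefficients algebra map. -/
def σalg : Polynomial (DownUp K r s) →ₐ[K] DownUp K r s :=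
  Polynomial.eval₂AlgHom (AlgHom.id K _) 1 (fun _ => Commute.one_right _)

@[simp] lemma σalg_C_mul_X (a : DownUp K r s) : σalg K r s (C a * X) = a := by
  rw [σalg, C_mul_X_eq_monomial]
  simp [Polynomial.eval₂_monomial]

lemma σalg_Δ (z : DownUp K r s) : σalg K r s (Δ K r s z) = z := by
  have h : (σalg K r s).comp (Δ K r s) = AlgHom.id K (DownUp K r s) := by
    apply hom_ext <;> simp
  calc σalg K r s (Δ K r s z) = ((σalg K r s).comp (Δ K r s)) z := rfl
    _ = z := by rw [h]; rfl

lemma σalg_eq_sum (p : Polynomial (DownUp K r s)) :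
    σalg K r s p = ∑ k ∈ p.support, p.coeff k := by
  rw [σalg]
  simp only [Polynomial.eval₂AlgHom_apply]
  rw [Polynomial.eval₂_eq_sum, Polynomial.sum]
  simp

/-- Constant coefficient as an `AlgHom`. -/
def ε0 : Polynomial (DownUp K r s) →ₐ[K] DownUp K r s :=
  { Polynomial.constantCoeff with
    commutes' := fun c => by
      simp [Polynomial.algebraMap_apply] }

@[simp] lemma ε0_apply (p : Polynomial (DownUp K r s)) : ε0 K r s p = p.coeff 0 := rfl

/-- The augmentation of the down-up algebra. -/
def εA : DownUp K r s →ₐ[K] DownUp K r s := (ε0 K r s).comp (Δ K r s)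

@[simp] lemma εA_d : εA K r s (DownUp.d K r s) = 0 := by
  rw [εA]; simp

@[simp] lemma εA_u : εA K r s (DownUp.u K r s) = 0 := by
  rw [εA]; simp

lemma εA_apply (z : DownUp K r s) : εA K r s z = (Δ K r s z).coeff 0 := rfl

end DownUpAux

namespace DownUpAux

variable (K : Type) [Field K] (r s : K)

/-- Model operator for `d` on `ℤ →₀ K` : `v_n ↦ r^(n-1) v_(n-1)`. -/
def Dop : Module.End K (ℤ →₀ K) :=
  Finsupp.lift (ℤ →₀ K) K ℤ (fun n => Finsupp.single (n - 1) (r ^ (n - 1)))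

/-- Model operator for `u` on `ℤ →₀ K` : `v_n ↦ v_(n+1)`. -/
def Uop : Module.End K (ℤ →₀ K) :=
  Finsupp.lift (ℤ →₀ K) K ℤ (fun n => Finsupp.single (n + 1) 1)

lemma Dop_single (n : ℤ) (c : K) :
    Dop K r (Finsupp.single n c) = Finsupp.single (n - 1) (c * r ^ (n - 1)) := by
  rw [Dop, Finsupp.lift_apply, Finsupp.sum_single_index (by simp), Finsupp.smul_single,
    smul_eq_mul]

lemma Uop_single (n : ℤ) (c : K) :
    Uop K (Finsupp.single n c) = Finsupp.single (n + 1) c := by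
  rw [Uop, Finsupp.lift_apply, Finsupp.sum_single_index (by simp), Finsupp.smul_single,
    smul_eq_mul, mul_one]

variable {r} in
lemma model_rel1 (hr : r ≠ 0) : Dop K r * Dop K r * Uop K =
    (r + s) • (Dop K r * Uop K * Dop K r) - (r * s) • (Uop K * Dop K r * Dop K r) := by
  apply Finsupp.lhom_ext
  intro n c
  simp only [Module.End.mul_apply, LinearMap.sub_apply, LinearMap.smul_apply,
    Dop_single, Uop_single, add_sub_cancel_right, sub_add_cancel]
  rw [Finsupp.smul_single, Finsupp.smul_single, ← Finsupp.single_sub]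
  congr 1
  have h1 : r ^ n = r ^ (n - 1) * r := by
    rw [← zpow_add_one₀ hr, sub_add_cancel]
  have h2 : r ^ (n - 1 - 1) = r ^ (n - 1) * r⁻¹ := by
    rw [zpow_sub_one₀ hr]
  simp only [smul_eq_mul]
  rw [h1, h2]
  field_simp
  ring

variable {r} in
lemma model_rel2 (hr : r ≠ 0) : Dop K r * Uop K * Uop K =
    (r + s) • (Uop K * Dop K r * Uop K) - (r * s) • (Uop K * Uop K * Dop K r) := by
  apply Finsupp.lhom_ext
  intro n c
  simp only [Module.End.mul_apply, LinearMap.sub_apply, LinearMap.smul_apply,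
    Dop_single, Uop_single, add_sub_cancel_right, sub_add_cancel]
  rw [Finsupp.smul_single, Finsupp.smul_single, ← Finsupp.single_sub]
  congr 1
  have h1 : r ^ (n + 1) = r ^ n * r := by rw [← zpow_add_one₀ hr]
  have h2 : r ^ n = r ^ (n - 1) * r := by
    rw [← zpow_add_one₀ hr, sub_add_cancel]
  simp only [smul_eq_mul]
  rw [h1, h2]
  ring

variable {r} in
/-- The representation of the down-up algebra on `ℤ →₀ K`. -/
def Φ (hr : r ≠ 0) : DownUp K r s →ₐ[K] Module.End K (ℤ →₀ K) :=
  dlift K r s (Dop K r) (Uop K) (model_rel1 K s hr) (model_rel2 K s hr)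

variable {K r s} in
lemma du_ne_ud (hr : r ≠ 0) (hr1 : r ≠ 1) :
    DownUp.d K r s * DownUp.u K r s ≠ DownUp.u K r s * DownUp.d K r s := by
  intro h
  have h2 := congrArg (Φ K s hr) h
  rw [map_mul, map_mul, Φ, dlift_d, dlift_u] at h2
  have h3 : (Dop K r) ((Uop K) (Finsupp.single (0:ℤ) (1:K)))
      = (Uop K) ((Dop K r) (Finsupp.single (0:ℤ) (1:K))) := by
    rw [← Module.End.mul_apply, ← Module.End.mul_apply, h2]
  rw [Uop_single, Dop_single, Dop_single, Uop_single] at h3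
  rw [show (0:ℤ)+1-1 = 0 by norm_num, show (0:ℤ)-1+1 = 0 by norm_num,
    show (0:ℤ)-1 = -1 by norm_num] at h3
  have h4 := congrArg (fun f : ℤ →₀ K => f 0) h3
  simp only [Finsupp.single_eq_same, zpow_zero, mul_one, one_mul, zpow_neg_one] at h4
  exact hr1 (by rw [← inv_inv r, ← h4, inv_one])

end DownUpAux

namespace DownUpAux

open Polynomial

variable (K : Type) [Field K] (r s : K)

/-- The generators as a function on `Fin 2`. -/
def gen : Fin 2 → DownUp K r s := ![DownUp.d K r s, DownUp.u K r s]

/-- Word in the generators indexed by a list. -/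
def wl (l : List (Fin 2)) : DownUp K r s := (l.map (gen K r s)).prod

@[simp] lemma wl_nil : wl K r s [] = 1 := rfl

lemma wl_cons (i : Fin 2) (l : List (Fin 2)) :
    wl K r s (i :: l) = gen K r s i * wl K r s l := by
  simp [wl]

lemma wl_append (l l' : List (Fin 2)) :
    wl K r s (l ++ l') = wl K r s l * wl K r s l' := by
  simp [wl]

lemma adjoin_du :
    Algebra.adjoin K {DownUp.d K r s, DownUp.u K r s} = ⊤ := by
  rw [eq_top_iff]
  rintro z -
  obtain ⟨w, rfl⟩ := RingQuot.mkAlgHom_surjective K (DownUpRel K r s) z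
  have hw : w ∈ Algebra.adjoin K (Set.range (FreeAlgebra.ι K (X := Fin 2))) := by
    rw [FreeAlgebra.adjoin_range_ι]; trivial
  have himg : RingQuot.mkAlgHom K (DownUpRel K r s) w ∈
      (Algebra.adjoin K (Set.range (FreeAlgebra.ι K (X := Fin 2)))).map
        (RingQuot.mkAlgHom K (DownUpRel K r s)) :=
    Subalgebra.mem_map.mpr ⟨w, hw, rfl⟩
  rw [AlgHom.map_adjoin] at himg
  refine Algebra.adjoin_mono ?_ himg
  rintro _ ⟨_, ⟨i, rfl⟩, rfl⟩
  fin_cases i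
  · exact Set.mem_insert _ _
  · exact Set.mem_insert_of_mem _ rfl

/-- Induction principle for the down-up algebra. -/
lemma downup_induction {p : DownUp K r s → Prop}
    (halg : ∀ c : K, p (algebraMap K (DownUp K r s) c))
    (hd : p (DownUp.d K r s)) (hu : p (DownUp.u K r s))
    (hadd : ∀ a b, p a → p b → p (a + b))
    (hmul : ∀ a b, p a → p b → p (a * b)) : ∀ z, p z := by
  intro z
  have hz : z ∈ Algebra.adjoin K {DownUp.d K r s, DownUp.u K r s} := by
    rw [adjoin_du]; trivial
  induction hz using Algebra.adjoin_induction with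
  | mem x hx =>
    rcases hx with h | h
    · rw [h]; exact hd
    · rw [Set.mem_singleton_iff.mp h]; exact hu
  | algebraMap c => exact halg c
  | add x y _ _ hx hy => exact hadd x y hx hy
  | mul x y _ _ hx hy => exact hmul x y hx hy

/-- Span of words of length `k`. -/
def Wk (k : ℕ) : Submodule K (DownUp K r s) :=
  Submodule.span K (wl K r s '' {l | l.length = k})

lemma one_mem_W0 : (1 : DownUp K r s) ∈ Wk K r s 0 :=
  Submodule.subset_span ⟨[], rfl, rfl⟩

lemma Wk_mul (i j : ℕ) : Wk K r s i * Wk K r s j ≤ Wk K r s (i + j) := by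
  rw [Wk, Wk, Submodule.span_mul_span]
  apply Submodule.span_le.mpr
  rintro _ ⟨_, ⟨l, hl, rfl⟩, _, ⟨l', hl', rfl⟩, rfl⟩
  exact Submodule.subset_span ⟨l ++ l',
    by simp [List.length_append, Set.mem_setOf_eq.mp hl, Set.mem_setOf_eq.mp hl'],
    wl_append K r s l l'⟩

/-- All coefficients of `Δ z` lie in the span of words of matching length. -/
lemma coeff_mem (z : DownUp K r s) : ∀ k : ℕ, (Δ K r s z).coeff k ∈ Wk K r s k := by
  induction z using downup_induction K r s with
  | halg c =>
    intro k
    rw [AlgHom.commutes, Polynomial.algebraMap_apply, Polynomial.coeff_C]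
    by_cases hk : k = 0
    · subst hk; rw [if_pos rfl, Algebra.algebraMap_eq_smul_one]
      exact Submodule.smul_mem _ _ (one_mem_W0 K r s)
    · rw [if_neg hk]; exact Submodule.zero_mem _
  | hd =>
    intro k
    rw [Δ_d, C_mul_X_eq_monomial, Polynomial.coeff_monomial]
    by_cases hk : 1 = k
    · subst hk; rw [if_pos rfl]
      exact Submodule.subset_span ⟨[0], by simp, by simp [wl, gen]⟩
    · rw [if_neg hk]; exact Submodule.zero_mem _
  | hu =>
    intro k
    rw [Δ_u, C_mul_X_eq_monomial, Polynomial.coeff_monomial]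
    by_cases hk : 1 = k
    · subst hk; rw [if_pos rfl]
      exact Submodule.subset_span ⟨[1], by simp, by simp [wl, gen]⟩
    · rw [if_neg hk]; exact Submodule.zero_mem _
  | hadd a b ha hb =>
    intro k
    rw [map_add, Polynomial.coeff_add]
    exact Submodule.add_mem _ (ha k) (hb k)
  | hmul a b ha hb =>
    intro k
    rw [map_mul, Polynomial.coeff_mul]
    apply Submodule.sum_mem
    rintro ⟨i, j⟩ hij
    have hij' : i + j = k := Finset.HasAntidiagonal.mem_antidiagonal.mp hij
    have hm : (Δ K r s a).coeff i * (Δ K r s b).coeff j ∈ Wk K r s (i + j) :=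
      Wk_mul K r s i j (Submodule.mul_mem_mul (ha i) (hb j))
    rwa [hij'] at hm

end DownUpAux

namespace DownUpAux

open Polynomial

variable (K : Type) [Field K] (r s : K)

/-- The augmentation ideal (as a `K`-submodule). -/
def Iaug : Submodule K (DownUp K r s) := LinearMap.ker (εA K r s).toLinearMap

lemma mem_Iaug_iff (z : DownUp K r s) : z ∈ Iaug K r s ↔ εA K r s z = 0 :=
  LinearMap.mem_ker

lemma gen_mem_Iaug (i : Fin 2) : gen K r s i ∈ Iaug K r s := by
  fin_cases i <;> rw [mem_Iaug_iff] <;> simp [gen]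

lemma wl_mem_pow (n : ℕ) : ∀ l : List (Fin 2), n + 1 ≤ l.length →
    wl K r s l ∈ Iaug K r s ^ (n + 1) := by
  induction n with
  | zero =>
    rintro (_ | ⟨i, t⟩) hl
    · simp at hl
    · rw [pow_one, mem_Iaug_iff, wl_cons, map_mul]
      have : εA K r s (gen K r s i) = 0 := (mem_Iaug_iff K r s _).mp (gen_mem_Iaug K r s i)
      rw [this, zero_mul]
  | succ n ih =>
    rintro (_ | ⟨i, t⟩) hl
    · simp at hl
    · rw [wl_cons, pow_succ']
      exact Submodule.mul_mem_mul (gen_mem_Iaug K r s i)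
        (ih t (by simp only [List.length_cons] at hl; omega))

lemma Wk_le_pow (n k : ℕ) (h : n + 1 ≤ k) : Wk K r s k ≤ Iaug K r s ^ (n + 1) := by
  apply Submodule.span_le.mpr
  rintro _ ⟨l, hl, rfl⟩
  exact wl_mem_pow K r s n l (le_of_le_of_eq h (Set.mem_setOf_eq.mp hl).symm)

/-- Polynomials all of whose coefficients below `m` vanish. -/
def Zf (m : ℕ) : Submodule K (Polynomial (DownUp K r s)) where
  carrier := {p | ∀ j < m, p.coeff j = 0}
  add_mem' := fun {p q} hp hq j hj => by
    rw [Polynomial.coeff_add, hp j hj, hq j hj, add_zero]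
  zero_mem' := fun j hj => Polynomial.coeff_zero j
  smul_mem' := fun c p hp j hj => by
    rw [Polynomial.coeff_smul, hp j hj, smul_zero]

lemma mem_Zf_iff (m : ℕ) (p : Polynomial (DownUp K r s)) :
    p ∈ Zf K r s m ↔ ∀ j < m, p.coeff j = 0 := Iff.rfl

lemma Δ_mem_Zf (n : ℕ) : ∀ z ∈ Iaug K r s ^ (n + 1), Δ K r s z ∈ Zf K r s (n + 1) := by
  induction n with
  | zero =>
    intro z hz
    rw [pow_one] at hz
    intro j hj
    interval_cases j
    exact (mem_Iaug_iff K r s z).mp hz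
  | succ n ih =>
    intro z hz
    rw [pow_succ'] at hz
    refine Submodule.mul_induction_on hz ?_ ?_
    · intro a ha b hb j hj
      rw [map_mul, Polynomial.coeff_mul]
      apply Finset.sum_eq_zero
      rintro ⟨i, jj⟩ hij
      have hij' : i + jj = j := Finset.HasAntidiagonal.mem_antidiagonal.mp hij
      rcases Nat.eq_zero_or_pos i with hi | hi
      · subst hi
        have h0 : (Δ K r s a).coeff 0 = 0 := (mem_Iaug_iff K r s a).mp ha
        rw [h0, zero_mul]
      · have hjj : jj < n + 1 := by omega
        rw [ih b hb jj hjj, mul_zero]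
    · intro x y hx hy j hj
      rw [map_add, Polynomial.coeff_add, hx j hj, hy j hj, add_zero]

lemma span_sup_pow_eq_top (n : ℕ) :
    Submodule.span K (wl K r s '' {l | l.length ≤ n}) ⊔ Iaug K r s ^ (n + 1) = ⊤ := by
  rw [eq_top_iff]
  rintro z -
  have hz : z = σalg K r s (Δ K r s z) := (σalg_Δ K r s z).symm
  rw [hz, σalg_eq_sum]
  apply Submodule.sum_mem
  intro k _
  rcases le_or_gt k n with hk | hk
  · apply Submodule.mem_sup_left
    refine Submodule.span_mono ?_ (coeff_mem K r s z k)
    rintro _ ⟨l, hl, rfl⟩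
    exact ⟨l, le_of_eq_of_le (Set.mem_setOf_eq.mp hl) hk, rfl⟩
  · exact Submodule.mem_sup_right (Wk_le_pow K r s n k hk (coeff_mem K r s z k))

lemma findim_quot (n : ℕ) :
    FiniteDimensional K (DownUp K r s ⧸ (Iaug K r s ^ (n + 1))) := by
  set J := Iaug K r s ^ (n + 1)
  set S := wl K r s '' {l | l.length ≤ n} with hS
  have hfin : S.Finite := (List.finite_length_le (Fin 2) n).image _
  have htop : Submodule.span K (J.mkQ '' S) = ⊤ := by
    have h1 : Submodule.map J.mkQ (Submodule.span K S ⊔ J) = ⊤ := by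
      rw [span_sup_pow_eq_top K r s n, Submodule.map_top, Submodule.range_mkQ]
    rw [Submodule.map_sup, Submodule.map_span] at h1
    have h2 : Submodule.map J.mkQ J = ⊥ := by
      rw [eq_bot_iff]
      rintro _ ⟨x, hx, rfl⟩
      simp only [Submodule.mkQ_apply, Submodule.mem_bot]
      exact (Submodule.Quotient.mk_eq_zero J).mpr hx
    rwa [h2, sup_bot_eq] at h1
  constructor
  rw [← htop]
  exact Submodule.fg_def.mpr ⟨J.mkQ '' S, hfin.image _, rfl⟩

end DownUpAux

namespace DownUpAux

open Polynomial

variable {K : Type} [Field K] {r s : K}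

section killing

variable {A' : Type} [Ring A'] [Algebra K A']

lemma coeff_mul_left_of_lt {Q : Polynomial A'} {k : ℕ} (hQ : ∀ j < k, Q.coeff j = 0)
    (R : Polynomial A') {j : ℕ} (hj : j < k) : (R * Q).coeff j = 0 := by
  rw [Polynomial.coeff_mul]
  apply Finset.sum_eq_zero
  rintro ⟨i, jj⟩ hij
  have h : i + jj = j := Finset.HasAntidiagonal.mem_antidiagonal.mp hij
  rw [hQ jj (by omega), mul_zero]

lemma coeff_mul_right_of_lt {Q : Polynomial A'} {k : ℕ} (hQ : ∀ j < k, Q.coeff j = 0)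
    (R : Polynomial A') {j : ℕ} (hj : j < k) : (Q * R).coeff j = 0 := by
  rw [Polynomial.coeff_mul]
  apply Finset.sum_eq_zero
  rintro ⟨i, jj⟩ hij
  have h : i + jj = j := Finset.HasAntidiagonal.mem_antidiagonal.mp hij
  rw [hQ i (by omega), zero_mul]

lemma coeff_mul_left_top {Q : Polynomial A'} {k : ℕ} (hQ : ∀ j < k, Q.coeff j = 0)
    (R : Polynomial A') : (R * Q).coeff k = R.coeff 0 * Q.coeff k := by
  rw [Polynomial.coeff_mul]
  apply Finset.sum_eq_single ((0 : ℕ), k)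
  · rintro ⟨i, jj⟩ hij hne
    have h : i + jj = k := Finset.HasAntidiagonal.mem_antidiagonal.mp hij
    have hjj : jj < k := by
      rcases Nat.eq_zero_or_pos i with h0 | h0
      · exfalso; apply hne; subst h0; simp only [zero_add] at h; rw [h]
      · omega
    rw [hQ jj hjj, mul_zero]
  · intro h
    exact absurd (Finset.HasAntidiagonal.mem_antidiagonal.mpr (zero_add k)) h

lemma coeff_mul_right_top {Q : Polynomial A'} {k : ℕ} (hQ : ∀ j < k, Q.coeff j = 0)
    (R : Polynomial A') : (Q * R).coeff k = Q.coeff k * R.coeff 0 := by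
  rw [Polynomial.coeff_mul]
  apply Finset.sum_eq_single ((k : ℕ), 0)
  · rintro ⟨i, jj⟩ hij hne
    have h : i + jj = k := Finset.HasAntidiagonal.mem_antidiagonal.mp hij
    have hi : i < k := by
      rcases Nat.eq_zero_or_pos jj with h0 | h0
      · exfalso; apply hne; subst h0; simp only [add_zero] at h; rw [h]
      · omega
    rw [hQ i hi, zero_mul]
  · intro h
    exact absurd (Finset.HasAntidiagonal.mem_antidiagonal.mpr (add_zero k)) h

variable {P Q : Polynomial A'} {a : K}

lemma coeff_PPQ (hP : P.coeff 0 = a • 1) {k : ℕ} (hQ : ∀ j < k, Q.coeff j = 0) :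
    (P * P * Q).coeff k = (a * a) • Q.coeff k := by
  rw [coeff_mul_left_top hQ (P * P), Polynomial.mul_coeff_zero, hP,
    smul_mul_smul_comm, one_mul, smul_mul_assoc, one_mul]

lemma coeff_PQP (hP : P.coeff 0 = a • 1) {k : ℕ} (hQ : ∀ j < k, Q.coeff j = 0) :
    (P * Q * P).coeff k = (a * a) • Q.coeff k := by
  rw [mul_assoc]
  have hQP : ∀ j < k, (Q * P).coeff j = 0 := fun j hj => coeff_mul_right_of_lt hQ P hj
  rw [coeff_mul_left_top hQP P, coeff_mul_right_top hQ P, hP, smul_mul_assoc, one_mul,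
    mul_smul_comm, mul_one, smul_smul]

lemma coeff_QPP (hP : P.coeff 0 = a • 1) {k : ℕ} (hQ : ∀ j < k, Q.coeff j = 0) :
    (Q * P * P).coeff k = (a * a) • Q.coeff k := by
  have hQP : ∀ j < k, (Q * P).coeff j = 0 := fun j hj => coeff_mul_right_of_lt hQ P hj
  rw [coeff_mul_right_top hQP P, coeff_mul_right_top hQ P, hP, mul_smul_comm, mul_one,
    mul_smul_comm, mul_one, smul_smul]

lemma smul_cancel {c : K} (hc : c ≠ 0) {x : A'} (h : c • x = 0) : x = 0 := by
  have := congrArg (fun y => c⁻¹ • y) h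
  simpa [smul_smul, inv_mul_cancel₀ hc] using this

lemma kill_aux (hrs : (1 - r) * (1 - s) ≠ 0) (ha : a ≠ 0) (hP : P.coeff 0 = a • 1)
    {k : ℕ} (hQ : ∀ j < k, Q.coeff j = 0)
    (e : (P * P * Q).coeff k = ((r + s) • (P * Q * P) - (r * s) • (Q * P * P)).coeff k ∨
         (Q * P * P).coeff k = ((r + s) • (P * Q * P) - (r * s) • (P * P * Q)).coeff k) :
    Q.coeff k = 0 := by
  have e' : (a * a) • Q.coeff k =
      (r + s) • ((a * a) • Q.coeff k) - (r * s) • ((a * a) • Q.coeff k) := by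
    rcases e with e | e
    · rwa [Polynomial.coeff_sub, Polynomial.coeff_smul, Polynomial.coeff_smul,
        coeff_PPQ hP hQ, coeff_PQP hP hQ, coeff_QPP hP hQ] at e
    · rwa [Polynomial.coeff_sub, Polynomial.coeff_smul, Polynomial.coeff_smul,
        coeff_QPP hP hQ, coeff_PQP hP hQ, coeff_PPQ hP hQ] at e
  rw [← sub_smul] at e'
  have e2 : ((1 - (r + s - r * s)) * (a * a)) • Q.coeff k = 0 := by
    rw [← smul_smul, sub_smul, one_smul]
    nth_rewrite 1 [e']
    rw [sub_self]
  have hscalar : (1 - (r + s - r * s)) * (a * a) =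
      (1 - r) * (1 - s) * (a * a) := by ring
  rw [hscalar] at e2
  exact smul_cancel (mul_ne_zero hrs (mul_ne_zero ha ha)) e2

lemma kill1 (hrs : (1 - r) * (1 - s) ≠ 0) (ha : a ≠ 0) (hP : P.coeff 0 = a • 1)
    (hrel : P * P * Q = (r + s) • (P * Q * P) - (r * s) • (Q * P * P)) : Q = 0 := by
  have key : ∀ k, Q.coeff k = 0 := by
    intro k
    induction k using Nat.strong_induction_on with
    | _ k ih =>
      exact kill_aux hrs ha hP ih (Or.inl (congrArg (fun p => p.coeff k) hrel))
  ext k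
  rw [key k, Polynomial.coeff_zero]

lemma kill2 (hrs : (1 - r) * (1 - s) ≠ 0) (ha : a ≠ 0) (hP : P.coeff 0 = a • 1)
    (hrel : Q * P * P = (r + s) • (P * Q * P) - (r * s) • (P * P * Q)) : Q = 0 := by
  have key : ∀ k, Q.coeff k = 0 := by
    intro k
    induction k using Nat.strong_induction_on with
    | _ k ih =>
      exact kill_aux hrs ha hP ih (Or.inr (congrArg (fun p => p.coeff k) hrel))
  ext k
  rw [key k, Polynomial.coeff_zero]

end killing

end DownUpAux

namespace DownUpAux

open Polynomial

variable {K : Type} [Field K] {r s : K}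

lemma range_comm {θ : DownUp K r s →ₐ[K] DownUp K r s} (w : DownUp K r s)
    (hdw : θ (DownUp.d K r s) ∈ (Polynomial.aeval w : Polynomial K →ₐ[K] DownUp K r s).range)
    (huw : θ (DownUp.u K r s) ∈ (Polynomial.aeval w : Polynomial K →ₐ[K] DownUp K r s).range)
    (z z' : DownUp K r s) : θ z * θ z' = θ z' * θ z := by
  have hall : ∀ t, θ t ∈ (Polynomial.aeval w : Polynomial K →ₐ[K] DownUp K r s).range := by
    intro t
    induction t using downup_induction K r s with
    | halg c => rw [AlgHom.commutes]; exact Subalgebra.algebraMap_mem _ c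
    | hd => exact hdw
    | hu => exact huw
    | hadd a b ha hb => rw [map_add]; exact add_mem ha hb
    | hmul a b ha hb => rw [map_mul]; exact mul_mem ha hb
  obtain ⟨f, hf⟩ := hall z
  obtain ⟨g, hg⟩ := hall z'
  rw [← hf, ← hg, ← map_mul, ← map_mul, mul_comm f g]

/-- Core statement: a surjective endomorphism is injective (generic case `r ≠ 1 ≠ s`). -/
lemma injective_of_surjective (hr : r ≠ 0) (hr1 : r ≠ 1) (hs1 : s ≠ 1)
    (θ : DownUp K r s →ₐ[K] DownUp K r s) (hsurj : Function.Surjective θ) :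
    Function.Injective θ := by
  have hrs1 : (1 - r) * (1 - s) ≠ 0 :=
    mul_ne_zero (sub_ne_zero.mpr (Ne.symm hr1)) (sub_ne_zero.mpr (Ne.symm hs1))
  -- the images of the generators
  -- constant terms
  have hW0 : Wk K r s 0 ≤ Submodule.span K {(1 : DownUp K r s)} := by
    apply Submodule.span_le.mpr
    rintro _ ⟨l, hl, rfl⟩
    have hl0 : l = [] := List.length_eq_zero_iff.mp (Set.mem_setOf_eq.mp hl)
    subst hl0
    simpa using Submodule.mem_span_singleton_self (1 : DownUp K r s)
  obtain ⟨a, ha⟩ := Submodule.mem_span_singleton.mp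
    (hW0 (coeff_mem K r s (θ (DownUp.d K r s)) 0))
  obtain ⟨b, hb⟩ := Submodule.mem_span_singleton.mp
    (hW0 (coeff_mem K r s (θ (DownUp.u K r s)) 0))
  -- relations for the images
  have hrel1 : Δ K r s (θ (DownUp.d K r s)) * Δ K r s (θ (DownUp.d K r s)) *
      Δ K r s (θ (DownUp.u K r s)) =
      (r + s) • (Δ K r s (θ (DownUp.d K r s)) * Δ K r s (θ (DownUp.u K r s)) *
        Δ K r s (θ (DownUp.d K r s)))
      - (r * s) • (Δ K r s (θ (DownUp.u K r s)) * Δ K r s (θ (DownUp.d K r s)) *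
        Δ K r s (θ (DownUp.d K r s))) := by
    have h := congrArg (Δ K r s) (congrArg θ (rel1A K r s))
    simpa only [map_mul, map_sub, map_smul] using h
  have hrel2 : Δ K r s (θ (DownUp.d K r s)) * Δ K r s (θ (DownUp.u K r s)) *
      Δ K r s (θ (DownUp.u K r s)) =
      (r + s) • (Δ K r s (θ (DownUp.u K r s)) * Δ K r s (θ (DownUp.d K r s)) *
        Δ K r s (θ (DownUp.u K r s)))
      - (r * s) • (Δ K r s (θ (DownUp.u K r s)) * Δ K r s (θ (DownUp.u K r s)) *
        Δ K r s (θ (DownUp.d K r s))) := by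
    have h := congrArg (Δ K r s) (congrArg θ (rel2A K r s))
    simpa only [map_mul, map_sub, map_smul] using h
  -- there is no surjective endomorphism with commutative image
  have hnc : ∀ w : DownUp K r s,
      θ (DownUp.d K r s) ∈ (Polynomial.aeval w : Polynomial K →ₐ[K] DownUp K r s).range →
      θ (DownUp.u K r s) ∈ (Polynomial.aeval w : Polynomial K →ₐ[K] DownUp K r s).range →
      False := by
    intro w hdw huw
    obtain ⟨p, hp⟩ := hsurj (DownUp.d K r s)
    obtain ⟨q, hq⟩ := hsurj (DownUp.u K r s)
    have h := range_comm w hdw huw p q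
    rw [hp, hq] at h
    exact du_ne_ud hr hr1 h
  -- the constant terms vanish
  have ha0 : a = 0 := by
    by_contra han
    have hQ : Δ K r s (θ (DownUp.u K r s)) = 0 := kill1 hrs1 han ha.symm hrel1
    have hU : θ (DownUp.u K r s) = 0 := by
      rw [← σalg_Δ K r s (θ (DownUp.u K r s)), hQ, map_zero]
    refine hnc (θ (DownUp.d K r s)) ⟨X, by simp⟩ ⟨0, by simp [hU]⟩
  have hb0 : b = 0 := by
    by_contra hbn
    have hQ : Δ K r s (θ (DownUp.d K r s)) = 0 := kill2 hrs1 hbn hb.symm hrel2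
    have hD : θ (DownUp.d K r s) = 0 := by
      rw [← σalg_Δ K r s (θ (DownUp.d K r s)), hQ, map_zero]
    refine hnc (θ (DownUp.u K r s)) ⟨0, by simp [hD]⟩ ⟨X, by simp⟩
  -- the augmentation is preserved
  have hεD : εA K r s (θ (DownUp.d K r s)) = 0 := by
    rw [εA_apply, ← ha, ha0, zero_smul]
  have hεU : εA K r s (θ (DownUp.u K r s)) = 0 := by
    rw [εA_apply, ← hb, hb0, zero_smul]
  have hcomp : (εA K r s).comp θ = εA K r s := by
    apply hom_ext
    · show εA K r s (θ (DownUp.d K r s)) = εA K r s (DownUp.d K r s)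
      rw [hεD, εA_d]
    · show εA K r s (θ (DownUp.u K r s)) = εA K r s (DownUp.u K r s)
      rw [hεU, εA_u]
  -- θ preserves powers of the augmentation ideal
  have hIstep : ∀ n : ℕ,
      Submodule.map θ.toLinearMap (Iaug K r s ^ (n + 1)) ≤ Iaug K r s ^ (n + 1) := by
    intro n
    induction n with
    | zero =>
      rw [pow_one]
      rintro _ ⟨z, hz, rfl⟩
      rw [mem_Iaug_iff, AlgHom.toLinearMap_apply]
      have h5 : εA K r s (θ z) = εA K r s z := AlgHom.congr_fun hcomp z
      rw [h5]
      exact (mem_Iaug_iff K r s z).mp hz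
    | succ n ih =>
      rw [pow_succ', Submodule.map_mul _ _ θ]
      refine mul_le_mul' ?_ ih
      rintro _ ⟨z, hz, rfl⟩
      rw [mem_Iaug_iff, AlgHom.toLinearMap_apply]
      have h5 : εA K r s (θ z) = εA K r s z := AlgHom.congr_fun hcomp z
      rw [h5]
      exact (mem_Iaug_iff K r s z).mp hz
  -- the kernel lies in every power of the augmentation ideal
  have hker : ∀ z : DownUp K r s, θ z = 0 → ∀ n : ℕ, z ∈ Iaug K r s ^ (n + 1) := by
    intro z hz n
    haveI := findim_quot K r s n
    set J := Iaug K r s ^ (n + 1) with hJ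
    have hle : J ≤ Submodule.comap θ.toLinearMap J :=
      Submodule.map_le_iff_le_comap.mp (hIstep n)
    set φ := Submodule.mapQ J J θ.toLinearMap hle with hφ
    have hφsurj : Function.Surjective φ := by
      intro y
      obtain ⟨y', rfl⟩ := Submodule.mkQ_surjective J y
      obtain ⟨x, rfl⟩ := hsurj y'
      exact ⟨J.mkQ x, by simp [hφ, Submodule.mkQ_apply, Submodule.mapQ_apply]⟩
    have hφinj : Function.Injective φ := LinearMap.injective_iff_surjective.mpr hφsurj
    have h1 : φ (J.mkQ z) = 0 := by
      simp [hφ, Submodule.mkQ_apply, Submodule.mapQ_apply, hz]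
    have h2 : J.mkQ z = 0 := by
      apply hφinj
      rw [h1, map_zero]
    exact (Submodule.Quotient.mk_eq_zero J).mp h2
  -- hence the kernel is zero
  have hker0 : ∀ z : DownUp K r s, θ z = 0 → z = 0 := by
    intro z hz
    have hcoeff : ∀ k : ℕ, (Δ K r s z).coeff k = 0 := by
      intro k
      exact Δ_mem_Zf K r s k z (hker z hz k) k (Nat.lt_succ_self k)
    have hΔ : Δ K r s z = 0 := by
      ext k
      rw [hcoeff k, Polynomial.coeff_zero]
    rw [← σalg_Δ K r s z, hΔ, map_zero]
  intro x y hxy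
  have h : θ (x - y) = 0 := by rw [map_sub, hxy, sub_self]
  exact sub_eq_zero.mp (hker0 _ h)

end DownUpAux


/-- Suppose `r, s ∈ K*` satisfy either (`rᵐsⁿ = 1 → m = n = 0`) or
(`r = s⁻¹ = q` is not a root of unity).  Then any surjective `K`-algebra
endomorphism of the down-up algebra `A(r+s, -rs)` is an algebra automorphism. -/
theorem stmt16 (K : Type) [Field K] [CharZero K] (r s : K) (hr : r ≠ 0) (hs : s ≠ 0)
    (hcase : (∀ m n : ℤ, r ^ m * s ^ n = 1 → m = 0 ∧ n = 0) ∨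
      (s = r⁻¹ ∧ ∀ n : ℕ, 0 < n → r ^ n ≠ 1))
    (θ : DownUp K r s →ₐ[K] DownUp K r s) (hsurj : Function.Surjective θ) :
    Function.Bijective θ := by
  have hr1 : r ≠ 1 := by
    rcases hcase with h | ⟨hsr, h⟩
    · intro hr1
      have := (h 1 0 (by rw [hr1]; norm_num)).1
      norm_num at this
    · intro hr1
      exact h 1 one_pos (by rw [hr1, pow_one])
  have hs1 : s ≠ 1 := by
    rcases hcase with h | ⟨hsr, h⟩
    · intro hs1
      have := (h 0 1 (by rw [hs1]; norm_num)).2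
      norm_num at this
    · intro hs1
      rw [hsr] at hs1
      exact hr1 (by rw [← inv_inv r, hs1, inv_one])
  exact ⟨DownUpAux.injective_of_surjective hr hr1 hs1 θ hsurj, hsurj⟩
end
end

section
/- The maps D₁ and D₂ defined on generators by D₁(d) = d, D₁(u) = 0 and D₂(d) = 0, D₂(u) = u extend to K-linear derivations of the down-up algebra A(r+s, -rs), and they satisfy D₁(x) = x, D₂(x) = x, D₁(y) = y, D₂(y) = y where x = du - r·ud, y = ud - s·du. -/
noncomputable section

theorem downUp.rel1 (K : Type) [Field K] (r s : K) :
    DownUp.d K r s * DownUp.d K r s * DownUp.u K r s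
      = (r + s) • (DownUp.d K r s * DownUp.u K r s * DownUp.d K r s)
        - (r * s) • (DownUp.u K r s * DownUp.d K r s * DownUp.d K r s) := by
  have h := RingQuot.mkAlgHom_rel K (DownUpRel.rel1 (K := K) (r := r) (s := s))
  simpa [DownUp.d, DownUp.u, map_sub, map_smul, map_mul] using h

theorem downUp.rel2 (K : Type) [Field K] (r s : K) :
    DownUp.d K r s * DownUp.u K r s * DownUp.u K r s
      = (r + s) • (DownUp.u K r s * DownUp.d K r s * DownUp.u K r s)
        - (r * s) • (DownUp.u K r s * DownUp.u K r s * DownUp.d K r s) := by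
  have h := RingQuot.mkAlgHom_rel K (DownUpRel.rel2 (K := K) (r := r) (s := s))
  simpa [DownUp.d, DownUp.u, map_sub, map_smul, map_mul] using h

theorem downUp.exists_der (K : Type) [Field K] (r s : K) (vd vu : DownUp K r s)
    (h1 : DownUp.d K r s * DownUp.d K r s * vu + (DownUp.d K r s * vd * DownUp.u K r s + vd * DownUp.d K r s * DownUp.u K r s)
      = (r + s) • (DownUp.d K r s * DownUp.u K r s * vd)
          + ((r + s) • (DownUp.d K r s * vu * DownUp.d K r s) + (r + s) • (vd * DownUp.u K r s * DownUp.d K r s))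
        - ((r * s) • (DownUp.u K r s * DownUp.d K r s * vd)
          + ((r * s) • (DownUp.u K r s * vd * DownUp.d K r s) + (r * s) • (vu * DownUp.d K r s * DownUp.d K r s))))
    (h2 : DownUp.d K r s * DownUp.u K r s * vu + (DownUp.d K r s * vu * DownUp.u K r s + vd * DownUp.u K r s * DownUp.u K r s)
      = (r + s) • (DownUp.u K r s * DownUp.d K r s * vu)
          + ((r + s) • (DownUp.u K r s * vd * DownUp.u K r s) + (r + s) • (vu * DownUp.d K r s * DownUp.u K r s))
        - ((r * s) • (DownUp.u K r s * DownUp.u K r s * vd)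
          + ((r * s) • (DownUp.u K r s * vu * DownUp.d K r s) + (r * s) • (vu * DownUp.u K r s * DownUp.d K r s)))) :
    ∃ D : DownUp K r s →ₗ[K] DownUp K r s,
      (∀ a b : DownUp K r s, D (a * b) = D a * b + a * D b) ∧
      D (DownUp.d K r s) = vd ∧ D (DownUp.u K r s) = vu := by
  classical
  have hA : True := trivial
  let f : Fin 2 → TrivSqZeroExt (DownUp K r s) (DownUp K r s) := ![(DownUp.d K r s, vd), (DownUp.u K r s, vu)]
  let φ : FreeAlgebra K (Fin 2) →ₐ[K] TrivSqZeroExt (DownUp K r s) (DownUp K r s) := FreeAlgebra.lift K f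
  have hφι : ∀ i, φ (FreeAlgebra.ι K i) = f i := fun i => FreeAlgebra.lift_ι_apply _ _
  have hφ : ∀ ⦃a b⦄, DownUpRel K r s a b → φ a = φ b := by
    rintro a b (h | h) <;>
    · simp only [map_sub, map_smul, map_mul, hφι]
      ext
      · show _ = _
        simp only [f, Matrix.cons_val_zero, Matrix.cons_val_one, Matrix.head_cons,
          TrivSqZeroExt.fst_mul, TrivSqZeroExt.snd_mul, TrivSqZeroExt.fst_smul,
          TrivSqZeroExt.snd_smul, TrivSqZeroExt.fst_sub, TrivSqZeroExt.snd_sub,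
          TrivSqZeroExt.fst_mk, TrivSqZeroExt.snd_mk, smul_eq_mul, op_smul_eq_mul, smul_add]
        try exact downUp.rel1 K r s
        try exact downUp.rel2 K r s
      · show _ = _
        simp only [f, Matrix.cons_val_zero, Matrix.cons_val_one, Matrix.head_cons,
          TrivSqZeroExt.fst_mul, TrivSqZeroExt.snd_mul, TrivSqZeroExt.fst_smul,
          TrivSqZeroExt.snd_smul, TrivSqZeroExt.fst_sub, TrivSqZeroExt.snd_sub,
          TrivSqZeroExt.fst_mk, TrivSqZeroExt.snd_mk, smul_eq_mul, op_smul_eq_mul, smul_add]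
        try exact h1
        try exact h2
  let Φ : DownUp K r s →ₐ[K] TrivSqZeroExt (DownUp K r s) (DownUp K r s) := RingQuot.liftAlgHom K ⟨φ, hφ⟩
  have hΦmk : ∀ a, Φ (RingQuot.mkAlgHom K (DownUpRel K r s) a) = φ a := fun a =>
    RingQuot.liftAlgHom_mkAlgHom_apply K _ _ _
  have hfst : ∀ a, (Φ a).fst = a := by
    have : (TrivSqZeroExt.fstHom K (DownUp K r s) (DownUp K r s)).comp Φ = AlgHom.id K (DownUp K r s) := by
      apply RingQuot.ringQuot_ext'
      apply FreeAlgebra.hom_ext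
      funext i
      fin_cases i <;>
        simp [Φ, hΦmk, hφι, f, DownUp.d, DownUp.u] <;> rfl
    exact fun a => congrArg (·) (AlgHom.congr_fun this a)
  refine ⟨(TrivSqZeroExt.sndHom (DownUp K r s) (DownUp K r s)).restrictScalars K ∘ₗ Φ.toLinearMap, ?_, ?_, ?_⟩
  · intro a b
    simp only [LinearMap.comp_apply, LinearMap.coe_restrictScalars, AlgHom.toLinearMap_apply,
      map_mul, TrivSqZeroExt.sndHom_apply, TrivSqZeroExt.snd_mul, smul_eq_mul, op_smul_eq_mul,
      hfst]
    exact add_comm _ _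
  · simp only [LinearMap.comp_apply, LinearMap.coe_restrictScalars, AlgHom.toLinearMap_apply,
      TrivSqZeroExt.sndHom_apply, DownUp.d, hΦmk, hφι]
    rfl
  · simp only [LinearMap.comp_apply, LinearMap.coe_restrictScalars, AlgHom.toLinearMap_apply,
      TrivSqZeroExt.sndHom_apply, DownUp.u, hΦmk, hφι]
    rfl

/-- The assignments `D₁(d) = d, D₁(u) = 0` and `D₂(d) = 0, D₂(u) = u` extend to
`K`-linear derivations of the down-up algebra `A(r+s, -rs)`, and these satisfy
`D₁(x) = x`, `D₂(x) = x`, `D₁(y) = y`, `D₂(y) = y`. -/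
theorem stmt18 (K : Type) [Field K] [CharZero K] (r s : K) (hr : r ≠ 0) (hs : s ≠ 0) :
    ∃ D₁ D₂ : DownUp K r s →ₗ[K] DownUp K r s,
      (∀ a b : DownUp K r s, D₁ (a * b) = D₁ a * b + a * D₁ b) ∧
      (∀ a b : DownUp K r s, D₂ (a * b) = D₂ a * b + a * D₂ b) ∧
      D₁ (DownUp.d K r s) = DownUp.d K r s ∧ D₁ (DownUp.u K r s) = 0 ∧
      D₂ (DownUp.d K r s) = 0 ∧ D₂ (DownUp.u K r s) = DownUp.u K r s ∧
      D₁ (DownUp.x K r s) = DownUp.x K r s ∧ D₂ (DownUp.x K r s) = DownUp.x K r s ∧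
      D₁ (DownUp.y K r s) = DownUp.y K r s ∧ D₂ (DownUp.y K r s) = DownUp.y K r s := by
  have hrel1 := downUp.rel1 K r s
  have hrel2 := downUp.rel2 K r s
  obtain ⟨D₁, h₁, hd₁, hu₁⟩ := downUp.exists_der K r s (DownUp.d K r s) 0
    (by simp only [mul_zero, zero_mul, add_zero, zero_add, smul_add, smul_zero]
        try rw [hrel1]
        try module) 
    (by simp only [mul_zero, zero_mul, add_zero, zero_add, smul_add, smul_zero]
        try rw [hrel2]
        try module)
  obtain ⟨D₂, h₂, hd₂, hu₂⟩ := downUp.exists_der K r s 0 (DownUp.u K r s)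
    (by simp only [mul_zero, zero_mul, add_zero, zero_add, smul_add, smul_zero]
        try rw [hrel1]
        try module)
    (by simp only [mul_zero, zero_mul, add_zero, zero_add, smul_add, smul_zero]
        try rw [hrel2]
        try module)
  refine ⟨D₁, D₂, h₁, h₂, hd₁, hu₁, hd₂, hu₂, ?_, ?_, ?_, ?_⟩ <;>
  · simp only [DownUp.x, DownUp.y, map_sub, map_smul, h₁, h₂, hd₁, hu₁, hd₂, hu₂,
      mul_zero, zero_mul, add_zero, zero_add]
    try module
end
end
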